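/- For any two n×m real matrices F and G, the characteristic polynomial satisfies det(F^T G - x·I_m) = Σ_{k=0}^{m} (-x)^{m-k} Σ_{|P|=k} det(F_P) det(G_P), where the inner sum is over all k×k square submatrix patterns P (i.e., pairs of k-element subsets of rows and columns), and the k=0 term is 1. -/
import Mathlib
open Matrix Finset

/-- Auxiliary: the permutation relating an injective `f` with image `I` to `I.orderEmbOfFin`. -/
noncomputable def permOf {k N : ℕ} (I : Finset (Fin N)) (h : I.card = k)
    (f : Fin k → Fin N) (hinj : Function.Injective f) (himg : ∀ i, f i ∈ I) :
    Equiv.Perm (Fin k) :=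
  Equiv.ofBijective (fun i => (I.orderIsoOfFin h).symm ⟨f i, himg i⟩)
    (by
      rw [Fintype.bijective_iff_injective_and_card]
      refine ⟨fun a b hab => ?_, rfl⟩
      have := congrArg (fun z => ((I.orderIsoOfFin h) z : Fin N)) hab
      simp only [OrderIso.apply_symm_apply] at this
      exact hinj this)

lemma orderEmbOfFin_permOf {k N : ℕ} (I : Finset (Fin N)) (h : I.card = k)
    (f : Fin k → Fin N) (hinj : Function.Injective f) (himg : ∀ i, f i ∈ I) (i : Fin k) :
    I.orderEmbOfFin h (permOf I h f hinj himg i) = f i := by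
  simp only [permOf, Equiv.ofBijective_apply]
  rw [← Finset.coe_orderIsoOfFin_apply, OrderIso.apply_symm_apply]

lemma sum_inj {k N : ℕ} (g : (Fin k → Fin N) → ℝ)
    (h0 : ∀ f : Fin k → Fin N, ¬ Function.Injective f → g f = 0) :
    ∑ f : Fin k → Fin N, g f
      = ∑ I ∈ Finset.univ.filter (fun I : Finset (Fin N) => I.card = k),
          ∑ σ : Equiv.Perm (Fin k),
            (if h : I.card = k then g (fun i => I.orderEmbOfFin h (σ i)) else 0) := by
  rw [← Finset.sum_filter_add_sum_filter_not Finset.univ (fun f => Function.Injective f)]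
  rw [Finset.sum_eq_zero (s := Finset.univ.filter (fun f : Fin k → Fin N => ¬ Function.Injective f))
    (fun f hf => h0 f (by simpa using (Finset.mem_filter.mp hf).2)), add_zero]
  rw [← Finset.sum_fiberwise_of_maps_to (g := fun f : Fin k → Fin N => Finset.image f Finset.univ)
    (t := Finset.univ.filter (fun I : Finset (Fin N) => I.card = k)) ?_ g]
  · refine Finset.sum_congr rfl fun I hI => ?_
    have hIc : I.card = k := (Finset.mem_filter.mp hI).2
    simp only [dif_pos hIc]
    have hinj : ∀ f, f ∈ (Finset.univ.filter (fun f : Fin k → Fin N => Function.Injective f)).filter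
        (fun f => Finset.image f Finset.univ = I) → Function.Injective f := by
      intro f hf
      have := (Finset.mem_filter.mp (Finset.mem_filter.mp hf).1).2
      simpa using this
    have himg : ∀ f, f ∈ (Finset.univ.filter (fun f : Fin k → Fin N => Function.Injective f)).filter
        (fun f => Finset.image f Finset.univ = I) → ∀ i, f i ∈ I := by
      intro f hf i
      have := (Finset.mem_filter.mp hf).2
      rw [← this]
      exact Finset.mem_image_of_mem f (Finset.mem_univ i)
    refine Finset.sum_bij' (fun f hf => permOf I hIc f (hinj f hf) (himg f hf))
      (fun σ _ => fun i => I.orderEmbOfFin hIc (σ i)) (fun f hf => Finset.mem_univ _)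
      ?_ ?_ ?_ ?_
    · intro σ _
      have hi : Function.Injective (fun i => I.orderEmbOfFin hIc (σ i)) :=
        (I.orderEmbOfFin hIc).injective.comp σ.injective
      refine Finset.mem_filter.mpr ⟨Finset.mem_filter.mpr ⟨Finset.mem_univ _, by simpa using hi⟩, ?_⟩
      ext a
      simp only [Finset.mem_image, Finset.mem_univ, true_and]
      constructor
      · rintro ⟨i, rfl⟩; exact Finset.orderEmbOfFin_mem I hIc _
      · intro ha
        obtain ⟨i, hi'⟩ : ∃ i, I.orderEmbOfFin hIc i = a := by
          have : a ∈ Set.range (I.orderEmbOfFin hIc) := by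
            rw [Finset.range_orderEmbOfFin]; exact ha
          exact this
        exact ⟨σ.symm i, by simp [hi']⟩
    · intro f hf
      funext i
      exact orderEmbOfFin_permOf I hIc f (hinj f hf) (himg f hf) i
    · intro σ hσ
      apply Equiv.ext; intro i
      apply (I.orderEmbOfFin hIc).injective
      rw [orderEmbOfFin_permOf]
    · intro f hf
      congr 1
      funext i
      exact (orderEmbOfFin_permOf I hIc f (hinj f hf) (himg f hf) i).symm
  · intro f hf
    simp only [Finset.mem_filter, Finset.mem_univ, true_and] at hf ⊢
    rw [Finset.card_image_of_injective _ hf]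
    simp [Finset.card_univ]


lemma det_eq_sum_fun {k N : ℕ} (A B : Matrix (Fin N) (Fin k) ℝ) :
    (Aᵀ * B).det = ∑ f : Fin k → Fin N, (A.submatrix f id).det * ∏ i, B (f i) i := by
  have hdet : ∀ f : Fin k → Fin N, (A.submatrix f id).det
      = ∑ σ : Equiv.Perm (Fin k), ((Equiv.Perm.sign σ : ℤ) : ℝ) * ∏ i, A (f i) (σ i) := by
    intro f
    rw [← Matrix.det_transpose, Matrix.det_apply']
    simp [Matrix.transpose_apply, Matrix.submatrix_apply]
  calc (Aᵀ * B).det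
      = ∑ f : Fin k → Fin N, ∑ σ : Equiv.Perm (Fin k),
          ((Equiv.Perm.sign σ : ℤ) : ℝ) * ∏ i, (A (f i) (σ i) * B (f i) i) := by
        simp only [Matrix.det_apply', Matrix.mul_apply, Matrix.transpose_apply,
          Finset.prod_univ_sum, Finset.mul_sum, Fintype.piFinset_univ]
        rw [Finset.sum_comm]
    _ = _ := by
        refine Finset.sum_congr rfl fun f _ => ?_
        rw [hdet, Finset.sum_mul]
        refine Finset.sum_congr rfl fun σ _ => ?_
        rw [Finset.prod_mul_distrib]; ring

lemma cauchy_binet {k N : ℕ} (A B : Matrix (Fin N) (Fin k) ℝ) :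
    (Aᵀ * B).det = ∑ I : Finset (Fin N),
      if h : I.card = k then
        (A.submatrix (I.orderEmbOfFin h) id).det * (B.submatrix (I.orderEmbOfFin h) id).det
      else 0 := by
  rw [det_eq_sum_fun, sum_inj (fun f => (A.submatrix f id).det * ∏ i, B (f i) i) ?_]
  · rw [Finset.sum_filter]
    refine Finset.sum_congr rfl fun I _ => ?_
    by_cases h : I.card = k
    · rw [if_pos h, dif_pos h]
      simp only [dif_pos h]
      set e := I.orderEmbOfFin h
      have key : ∀ σ : Equiv.Perm (Fin k),
          (A.submatrix (fun i => e (σ i)) id).det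
            = ((Equiv.Perm.sign σ : ℤ) : ℝ) * (A.submatrix e id).det := by
        intro σ
        have : A.submatrix (fun i => e (σ i)) id = (A.submatrix e id).submatrix σ id := by
          simp [Matrix.submatrix_submatrix, Function.comp_def]
        rw [this, Matrix.det_permute]
      calc ∑ σ : Equiv.Perm (Fin k),
            (A.submatrix (fun i => e (σ i)) id).det * ∏ i, B (e (σ i)) i
          = (A.submatrix e id).det * ∑ σ : Equiv.Perm (Fin k),
              ((Equiv.Perm.sign σ : ℤ) : ℝ) * ∏ i, (B.submatrix e id) (σ i) i := by
            rw [Finset.mul_sum]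
            refine Finset.sum_congr rfl fun σ _ => ?_
            rw [key σ]
            simp only [Matrix.submatrix_apply, id_eq]
            ring
        _ = (A.submatrix e id).det * (B.submatrix e id).det := by
            rw [← Matrix.det_apply']
    · rw [if_neg h]
      simp [h]
  · intro f hf
    rw [Function.not_injective_iff] at hf
    obtain ⟨i, j, hij, hne⟩ := hf
    have hz : (A.submatrix f id).det = 0 :=
      Matrix.det_zero_of_row_eq hne (by funext l; simp [Matrix.submatrix_apply, hij])
    simp [hz]


lemma det_piecewise_one {m : ℕ} (A : Matrix (Fin m) (Fin m) ℝ) (S : Finset (Fin m)) :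
    (Matrix.of fun i j => if i ∈ S then A i j else (1 : Matrix (Fin m) (Fin m) ℝ) i j).det
      = (A.submatrix (S.orderEmbOfFin rfl) (S.orderEmbOfFin rfl)).det := by
  set N : Matrix (Fin m) (Fin m) ℝ :=
    Matrix.of fun i j => if i ∈ S then A i j else (1 : Matrix (Fin m) (Fin m) ℝ) i j with hN
  set e := Equiv.sumCompl (fun a => a ∈ S) with he
  have h1 : N.det = (N.submatrix e e).det := (Matrix.det_submatrix_equiv_self e N).symm
  have h2 : N.submatrix e e = Matrix.fromBlocks
      (A.submatrix (fun i : {a : Fin m // a ∈ S} => (i : Fin m)) (fun j : {a : Fin m // a ∈ S} => (j : Fin m)))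
      (A.submatrix (fun i : {a : Fin m // a ∈ S} => (i : Fin m)) (fun j : {a : Fin m // ¬ a ∈ S} => (j : Fin m)))
      0 1 := by
    ext i j
    cases i with
    | inl i =>
      cases j with
      | inl j => simp [hN, he, i.2]
      | inr j => simp [hN, he, i.2]
    | inr i =>
      cases j with
      | inl j =>
        have : (i : Fin m) ≠ (j : Fin m) := by
          intro h
          exact i.2 (h ▸ j.2)
        simp [hN, he, i.2, Matrix.one_apply, this]
      | inr j =>
        by_cases hij : i = j
        · subst hij; simp [hN, he, i.2, Matrix.one_apply]
        · have : (i : Fin m) ≠ (j : Fin m) := fun h => hij (Subtype.ext h)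
          simp [hN, he, i.2, Matrix.one_apply, this, hij]
  rw [h1, h2, Matrix.det_fromBlocks_zero₂₁, Matrix.det_one, mul_one]
  set φ := (S.orderIsoOfFin rfl).toEquiv with hφ
  rw [← Matrix.det_submatrix_equiv_self φ]
  have h3 : (A.submatrix (fun i : {a : Fin m // a ∈ S} => (i : Fin m))
      (fun j : {a : Fin m // a ∈ S} => (j : Fin m))).submatrix φ φ
      = A.submatrix (S.orderEmbOfFin rfl) (S.orderEmbOfFin rfl) := by
    ext i j
    simp [hφ, Finset.coe_orderIsoOfFin_apply]
  rw [h3]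

lemma det_add_smul_one {m : ℕ} (A : Matrix (Fin m) (Fin m) ℝ) (c : ℝ) :
    (A + c • (1 : Matrix (Fin m) (Fin m) ℝ)).det
      = ∑ S : Finset (Fin m), c ^ (m - S.card) *
          (A.submatrix (S.orderEmbOfFin rfl) (S.orderEmbOfFin rfl)).det := by
  have expand := MultilinearMap.map_add_univ
    (Matrix.detRowAlternating : (Fin m → ℝ) [⋀^Fin m]→ₗ[ℝ] ℝ).toMultilinearMap
    (fun i => A i) (fun i => c • (1 : Matrix (Fin m) (Fin m) ℝ) i)
  have hL : (A + c • (1 : Matrix (Fin m) (Fin m) ℝ)).det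
      = ∑ S : Finset (Fin m),
        Matrix.detRowAlternating
          (S.piecewise (fun i => A i) (fun i => c • (1 : Matrix (Fin m) (Fin m) ℝ) i)) := by
    exact expand
  rw [hL]
  refine Finset.sum_congr rfl fun S _ => ?_
  set N : Fin m → Fin m → ℝ := Sᶜ.piecewise (fun i => (1 : Matrix (Fin m) (Fin m) ℝ) i) (fun i => A i) with hNdef
  have hpw : S.piecewise (fun i => A i) (fun i => c • (1 : Matrix (Fin m) (Fin m) ℝ) i)
      = Sᶜ.piecewise (fun i => c • N i) N := by
    funext i
    by_cases hi : i ∈ S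
    · rw [Finset.piecewise_eq_of_mem _ _ _ hi,
        Finset.piecewise_eq_of_notMem _ _ _ (by simpa using hi), hNdef,
        Finset.piecewise_eq_of_notMem _ _ _ (by simpa using hi)]
    · rw [Finset.piecewise_eq_of_notMem _ _ _ hi,
        Finset.piecewise_eq_of_mem _ _ _ (by simpa using hi), hNdef,
        Finset.piecewise_eq_of_mem _ _ _ (by simpa using hi)]
  rw [hpw]
  have hsmul := MultilinearMap.map_piecewise_smul
    (Matrix.detRowAlternating : (Fin m → ℝ) [⋀^Fin m]→ₗ[ℝ] ℝ).toMultilinearMap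
    (fun _ => c) N Sᶜ
  have : Matrix.detRowAlternating (Sᶜ.piecewise (fun i => c • N i) N)
      = (∏ _i ∈ Sᶜ, c) * Matrix.detRowAlternating N := hsmul
  rw [this, Finset.prod_const, Finset.card_compl, Fintype.card_fin]
  congr 1
  have hNeq : (Matrix.of N : Matrix (Fin m) (Fin m) ℝ)
      = Matrix.of fun i j => if i ∈ S then A i j else (1 : Matrix (Fin m) (Fin m) ℝ) i j := by
    ext i j
    by_cases hi : i ∈ S
    · have h1 : i ∉ Sᶜ := by simpa using hi
      rw [Matrix.of_apply, Matrix.of_apply, if_pos hi, hNdef,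
        Finset.piecewise_eq_of_notMem _ _ _ h1]
    · have h1 : i ∈ Sᶜ := by simpa using hi
      rw [Matrix.of_apply, Matrix.of_apply, if_neg hi, hNdef,
        Finset.piecewise_eq_of_mem _ _ _ h1]
  have : Matrix.detRowAlternating N = (Matrix.of N : Matrix (Fin m) (Fin m) ℝ).det := rfl
  rw [this, hNeq, det_piecewise_one]

lemma det_orderEmb_cast {m k : ℕ} (A : Matrix (Fin m) (Fin m) ℝ) (S : Finset (Fin m))
    (h : S.card = k) :
    (A.submatrix (S.orderEmbOfFin rfl) (S.orderEmbOfFin rfl)).det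
      = (A.submatrix (S.orderEmbOfFin h) (S.orderEmbOfFin h)).det := by
  subst h; rfl

theorem generalized_cauchy_binet {n m : ℕ} (F G : Matrix (Fin n) (Fin m) ℝ) (x : ℝ) :
    (Fᵀ * G - x • (1 : Matrix (Fin m) (Fin m) ℝ)).det =
      ∑ k ∈ Finset.range (m + 1), (-x) ^ (m - k) *
        ∑ I : Finset (Fin n), ∑ J : Finset (Fin m),
          (if hI : I.card = k then
            (if hJ : J.card = k then
              (F.submatrix (I.orderEmbOfFin hI) (J.orderEmbOfFin hJ)).det *
              (G.submatrix (I.orderEmbOfFin hI) (J.orderEmbOfFin hJ)).det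
            else 0)
          else 0) := by
  have h0 : Fᵀ * G - x • (1 : Matrix (Fin m) (Fin m) ℝ)
      = Fᵀ * G + (-x) • (1 : Matrix (Fin m) (Fin m) ℝ) := by
    rw [sub_eq_add_neg, neg_smul]
  rw [h0, det_add_smul_one]
  rw [← Finset.sum_fiberwise_of_maps_to (g := Finset.card) (t := Finset.range (m + 1))
    (fun S _ => Finset.mem_range.mpr (Nat.lt_succ_of_le (by
      simpa using Finset.card_le_univ S)))
    (fun S => (-x) ^ (m - S.card) *
      ((Fᵀ * G).submatrix (S.orderEmbOfFin rfl) (S.orderEmbOfFin rfl)).det)]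
  refine Finset.sum_congr rfl fun k hk => ?_
  -- For each J of cardinality k, Cauchy-Binet identifies the inner I-sum.
  have hJsum : ∀ J : Finset (Fin m),
      (∑ I : Finset (Fin n),
        (if hI : I.card = k then
            (if hJ : J.card = k then
              (F.submatrix (I.orderEmbOfFin hI) (J.orderEmbOfFin hJ)).det *
              (G.submatrix (I.orderEmbOfFin hI) (J.orderEmbOfFin hJ)).det
            else 0)
          else 0))
      = (if hJ : J.card = k then
          ((Fᵀ * G).submatrix (J.orderEmbOfFin hJ) (J.orderEmbOfFin hJ)).det else 0) := by
    intro J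
    by_cases hJ : J.card = k
    · simp only [dif_pos hJ]
      have hAB : (Fᵀ * G).submatrix (J.orderEmbOfFin hJ) (J.orderEmbOfFin hJ)
          = (F.submatrix id (J.orderEmbOfFin hJ))ᵀ * (G.submatrix id (J.orderEmbOfFin hJ)) := by
        ext i j
        simp [Matrix.mul_apply, Matrix.submatrix_apply, Matrix.transpose_apply]
      rw [hAB, cauchy_binet]
      refine Finset.sum_congr rfl fun I _ => ?_
      by_cases hI : I.card = k
      · rw [dif_pos hI, dif_pos hI]
        have e1 : (F.submatrix id (J.orderEmbOfFin hJ)).submatrix (I.orderEmbOfFin hI) id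
            = F.submatrix (I.orderEmbOfFin hI) (J.orderEmbOfFin hJ) := by
          rw [Matrix.submatrix_submatrix]
          simp [Function.comp_def]
        have e2 : (G.submatrix id (J.orderEmbOfFin hJ)).submatrix (I.orderEmbOfFin hI) id
            = G.submatrix (I.orderEmbOfFin hI) (J.orderEmbOfFin hJ) := by
          rw [Matrix.submatrix_submatrix]
          simp [Function.comp_def]
        rw [e1, e2]
      · rw [dif_neg hI, dif_neg hI]
    · simp [hJ]
  have hswap : (∑ I : Finset (Fin n), ∑ J : Finset (Fin m),
      (if hI : I.card = k then
          (if hJ : J.card = k then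
            (F.submatrix (I.orderEmbOfFin hI) (J.orderEmbOfFin hJ)).det *
            (G.submatrix (I.orderEmbOfFin hI) (J.orderEmbOfFin hJ)).det
          else 0)
        else 0))
      = ∑ J : Finset (Fin m),
          (if hJ : J.card = k then
            ((Fᵀ * G).submatrix (J.orderEmbOfFin hJ) (J.orderEmbOfFin hJ)).det else 0) := by
    rw [Finset.sum_comm]
    exact Finset.sum_congr rfl fun J _ => hJsum J
  rw [hswap]
  rw [Finset.mul_sum]
  rw [← Finset.sum_subset (Finset.filter_subset (fun J : Finset (Fin m) => J.card = k) Finset.univ)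
    (fun J _ hJ => by
      have : ¬ J.card = k := by simpa using hJ
      rw [dif_neg this, mul_zero])]
  refine Finset.sum_congr rfl fun S hS => ?_
  have hSc : S.card = k := (Finset.mem_filter.mp hS).2
  rw [dif_pos hSc, det_orderEmb_cast (Fᵀ * G) S hSc, hSc]
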